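/- Let σ > 0 and let W_σ be the Lennard-Jones potential. Then for every a > 0, Σ_{j=1}^∞ W_σ''(a·j) = (σ^6 · a^{−14} · π^8 / 467775) · (8·σ^6·π^6 − 2079·a^6). Equivalently, Σ_{j=1}^∞ W_σ''(a·j) = 156·σ^{12}·a^{−14}·ζ(14) − 42·σ^6·a^{−8}·ζ(8), with ζ(8) = π^8/9450 and ζ(14) = 2π^{14}/18243225. -/

import Mathlib

open Real Finset

/-- The Lennard-Jones potential `W_σ(t) = (σ/t)^12 − (σ/t)^6`. -/
noncomputable def LJ (σ : ℝ) : ℝ → ℝ := fun t => (σ / t) ^ 12 - (σ / t) ^ 6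

/-- Riemann zeta function for real `s > 1`: `ζ(s) = ∑_{j=1}^∞ j^{−s}`. -/
noncomputable def zetaR (s : ℝ) : ℝ := ∑' j : ℕ, ((j : ℝ) + 1) ^ (-s)

theorem b5 : bernoulli' 5 = 0 := by
  rw [bernoulli'_def]; norm_num [sum_range_succ, (by decide : Nat.choose 5 2 = 10)]
theorem b6 : bernoulli' 6 = 1/42 := by
  rw [bernoulli'_def]; norm_num [sum_range_succ, b5, (by decide : Nat.choose 6 2 = 15), (by decide : Nat.choose 6 4 = 15)]
theorem b7 : bernoulli' 7 = 0 := by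
  rw [bernoulli'_def]; norm_num [sum_range_succ, b5, b6, (by decide : Nat.choose 7 2 = 21), (by decide : Nat.choose 7 4 = 35), (by decide : Nat.choose 7 6 = 7)]
theorem b8 : bernoulli' 8 = -1/30 := by
  rw [bernoulli'_def]; norm_num [sum_range_succ, b5, b6, b7, (by decide : Nat.choose 8 2 = 28), (by decide : Nat.choose 8 4 = 70), (by decide : Nat.choose 8 6 = 28)]
theorem b9 : bernoulli' 9 = 0 := by
  rw [bernoulli'_def]; norm_num [sum_range_succ, b5, b6, b7, b8, (by decide : Nat.choose 9 2 = 36), (by decide : Nat.choose 9 4 = 126), (by decide : Nat.choose 9 6 = 84), (by decide : Nat.choose 9 8 = 9)]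
theorem b10 : bernoulli' 10 = 5/66 := by
  rw [bernoulli'_def]; norm_num [sum_range_succ, b5, b6, b7, b8, b9, (by decide : Nat.choose 10 2 = 45), (by decide : Nat.choose 10 4 = 210), (by decide : Nat.choose 10 6 = 210), (by decide : Nat.choose 10 8 = 45)]
theorem b11 : bernoulli' 11 = 0 := by
  rw [bernoulli'_def]; norm_num [sum_range_succ, b5, b6, b7, b8, b9, b10, (by decide : Nat.choose 11 2 = 55), (by decide : Nat.choose 11 4 = 330), (by decide : Nat.choose 11 6 = 462), (by decide : Nat.choose 11 8 = 165), (by decide : Nat.choose 11 10 = 11)]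
theorem b12 : bernoulli' 12 = -691/2730 := by
  rw [bernoulli'_def]; norm_num [sum_range_succ, b5, b6, b7, b8, b9, b10, b11, (by decide : Nat.choose 12 2 = 66), (by decide : Nat.choose 12 4 = 495), (by decide : Nat.choose 12 6 = 924), (by decide : Nat.choose 12 8 = 495), (by decide : Nat.choose 12 10 = 66)]
theorem b13 : bernoulli' 13 = 0 := by
  rw [bernoulli'_def]; norm_num [sum_range_succ, b5, b6, b7, b8, b9, b10, b11, b12, (by decide : Nat.choose 13 2 = 78), (by decide : Nat.choose 13 4 = 715), (by decide : Nat.choose 13 6 = 1716), (by decide : Nat.choose 13 8 = 1287), (by decide : Nat.choose 13 10 = 286), (by decide : Nat.choose 13 12 = 13)]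
theorem b14 : bernoulli' 14 = 7/6 := by
  rw [bernoulli'_def]; norm_num [sum_range_succ, b5, b6, b7, b8, b9, b10, b11, b12, b13, (by decide : Nat.choose 14 2 = 91), (by decide : Nat.choose 14 4 = 1001), (by decide : Nat.choose 14 6 = 3003), (by decide : Nat.choose 14 8 = 3003), (by decide : Nat.choose 14 10 = 1001), (by decide : Nat.choose 14 12 = 91)]

theorem LJ_eq (σ : ℝ) : LJ σ = fun s => σ^12 * s^(-12:ℤ) - σ^6 * s^(-6:ℤ) := by
  funext s
  have h : ∀ n : ℕ, s ^ (-(n:ℤ)) = (s ^ n)⁻¹ := fun n => by rw [zpow_neg, zpow_natCast]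
  rw [show (-12:ℤ) = -(12:ℕ) by norm_num, show (-6:ℤ) = -(6:ℕ) by norm_num, h, h]
  simp [LJ, div_eq_mul_inv, mul_pow, inv_pow]

theorem deriv_LJ (σ : ℝ) {s : ℝ} (hs : s ≠ 0) :
    deriv (LJ σ) s = (σ^12 * (-12)) * s^(-13:ℤ) - (σ^6 * (-6)) * s^(-7:ℤ) := by
  rw [LJ_eq]
  have h1 : DifferentiableAt ℝ (fun x : ℝ => x ^ (-12:ℤ)) s :=
    differentiableAt_zpow.mpr (Or.inl hs)
  have h2 : DifferentiableAt ℝ (fun x : ℝ => x ^ (-6:ℤ)) s :=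
    differentiableAt_zpow.mpr (Or.inl hs)
  rw [deriv_fun_sub (h1.const_mul _) (h2.const_mul _), deriv_const_mul _ h1, deriv_const_mul _ h2,
    deriv_zpow, deriv_zpow]
  norm_num; ring

theorem deriv2_LJ (σ : ℝ) {t : ℝ} (ht : t ≠ 0) :
    deriv (deriv (LJ σ)) t = 156*σ^12*t^(-14:ℤ) - 42*σ^6*t^(-8:ℤ) := by
  have hev : deriv (LJ σ) =ᶠ[nhds t]
      (fun s => (σ^12 * (-12)) * s^(-13:ℤ) - (σ^6 * (-6)) * s^(-7:ℤ)) := by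
    filter_upwards [isOpen_ne.mem_nhds ht] with s hs
    exact deriv_LJ σ hs
  rw [hev.deriv_eq]
  have h1 : DifferentiableAt ℝ (fun x : ℝ => x ^ (-13:ℤ)) t :=
    differentiableAt_zpow.mpr (Or.inl ht)
  have h2 : DifferentiableAt ℝ (fun x : ℝ => x ^ (-7:ℤ)) t :=
    differentiableAt_zpow.mpr (Or.inl ht)
  rw [deriv_fun_sub (h1.const_mul _) (h2.const_mul _), deriv_const_mul _ h1, deriv_const_mul _ h2,
    deriv_zpow, deriv_zpow]
  norm_num; ring

theorem hs14 : HasSum (fun j : ℕ => ((j:ℝ)+1) ^ (-(14:ℝ))) (2 * π^14 / 18243225) := by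
  have H : HasSum (fun n : ℕ => 1 / (n:ℝ) ^ (2*7)) (2 * π^14 / 18243225) := by
    convert hasSum_zeta_nat (k := 7) (by norm_num) using 1
    rw [bernoulli_eq_bernoulli'_of_ne_one (by norm_num), b14]
    push_cast
    norm_num [Nat.factorial]
    ring
  have H' := (hasSum_nat_add_iff (f := fun n : ℕ => 1 / (n:ℝ) ^ (2*7)) 1).mpr (by simpa using H)
  refine H'.congr_fun fun j => ?_
  rw [show (-(14:ℝ)) = ((-14:ℤ):ℝ) by norm_num, Real.rpow_intCast,
    show (-14:ℤ) = -(14:ℕ) by norm_num, zpow_neg, zpow_natCast]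
  push_cast
  norm_num

theorem hs8 : HasSum (fun j : ℕ => ((j:ℝ)+1) ^ (-(8:ℝ))) (π^8 / 9450) := by
  have H : HasSum (fun n : ℕ => 1 / (n:ℝ) ^ (2*4)) (π^8 / 9450) := by
    convert hasSum_zeta_nat (k := 4) (by norm_num) using 1
    rw [bernoulli_eq_bernoulli'_of_ne_one (by norm_num), b8]
    push_cast
    norm_num [Nat.factorial]
    ring
  have H' := (hasSum_nat_add_iff (f := fun n : ℕ => 1 / (n:ℝ) ^ (2*4)) 1).mpr (by simpa using H)
  refine H'.congr_fun fun j => ?_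
  rw [show (-(8:ℝ)) = ((-8:ℤ):ℝ) by norm_num, Real.rpow_intCast,
    show (-8:ℤ) = -(8:ℕ) by norm_num, zpow_neg, zpow_natCast]
  push_cast
  norm_num

/-- `∑_{j=1}^∞ W_σ''(aj) = (σ^6 a^{−14} π^8/467775)(8σ^6π^6 − 2079 a^6)`,
equivalently `156 σ^12 a^{−14} ζ(14) − 42 σ^6 a^{−8} ζ(8)`, with
`ζ(8) = π^8/9450` and `ζ(14) = 2π^14/18243225`. -/
theorem stmt18 (σ a : ℝ) (hσ : 0 < σ) (ha : 0 < a) :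
    (∑' j : ℕ, deriv (deriv (LJ σ)) (a * ((j : ℝ) + 1)) =
      (σ ^ 6 * a ^ (-14 : ℤ) * π ^ 8 / 467775) * (8 * σ ^ 6 * π ^ 6 - 2079 * a ^ 6)) ∧
    (∑' j : ℕ, deriv (deriv (LJ σ)) (a * ((j : ℝ) + 1)) =
      156 * σ ^ 12 * a ^ (-14 : ℤ) * zetaR 14 - 42 * σ ^ 6 * a ^ (-8 : ℤ) * zetaR 8) ∧
    zetaR 8 = π ^ 8 / 9450 ∧
    zetaR 14 = 2 * π ^ 14 / 18243225 := by
  have hz8 : zetaR 8 = π ^ 8 / 9450 := hs8.tsum_eq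
  have hz14 : zetaR 14 = 2 * π ^ 14 / 18243225 := hs14.tsum_eq
  have key : ∀ j : ℕ, deriv (deriv (LJ σ)) (a * ((j:ℝ)+1)) =
      156 * σ^12 * a^(-14:ℤ) * (((j:ℝ)+1) ^ (-(14:ℝ)))
      - 42 * σ^6 * a^(-8:ℤ) * (((j:ℝ)+1) ^ (-(8:ℝ))) := by
    intro j
    have hj : (0:ℝ) < (j:ℝ) + 1 := by positivity
    rw [deriv2_LJ σ (by positivity : a * ((j:ℝ)+1) ≠ 0), mul_zpow, mul_zpow]
    have e14 : ((j:ℝ)+1) ^ (-14:ℤ) = ((j:ℝ)+1) ^ (-(14:ℝ)) := by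
      rw [show (-(14:ℝ)) = ((-14:ℤ):ℝ) by norm_num, Real.rpow_intCast]
    have e8 : ((j:ℝ)+1) ^ (-8:ℤ) = ((j:ℝ)+1) ^ (-(8:ℝ)) := by
      rw [show (-(8:ℝ)) = ((-8:ℤ):ℝ) by norm_num, Real.rpow_intCast]
    rw [e14, e8]; ring
  have hsum : HasSum (fun j : ℕ => deriv (deriv (LJ σ)) (a * ((j:ℝ)+1)))
      (156 * σ^12 * a^(-14:ℤ) * (2 * π^14 / 18243225)
        - 42 * σ^6 * a^(-8:ℤ) * (π^8 / 9450)) := by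
    refine HasSum.congr_fun ?_ fun j => key j
    exact (hs14.mul_left _).sub (hs8.mul_left _)
  have hts := hsum.tsum_eq
  have haa : a^(-8:ℤ) = a^(-14:ℤ) * a^6 := by
    rw [show (a:ℝ)^(6:ℕ) = a^(6:ℤ) from (zpow_natCast a 6).symm, ← zpow_add₀ ha.ne']
    norm_num
  refine ⟨?_, ?_, hz8, hz14⟩
  · rw [hts, haa]; ring
  · rw [hts, hz8, hz14]
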